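/- Let I = {1,…,κ} with κ ≥ 2, and for each i ∈ I let A_i ∈ ℝ^{2×2} be invertible with all entries strictly positive and ‖A_i‖ ≤ ᾱ < 1, and let a_i ∈ ℝ². Let E be the attractor of the affine IFS {x ↦ A_i x + a_i}, and set x_i = a_i + Σ_{n≥0} A_i A₁ⁿ a₁ and y_i = a_i + Σ_{n≥0} A_i A_κⁿ a_κ for i ∈ I. Write x ≺ y if both coordinates of y − x are strictly positive. If x_i ≺ x_{i+1} ≺ y_i ≺ y_{i+1} for every i ∈ {1,…,κ−1}, then for every vector e ∈ ℝ² with strictly positive coordinates, the set {x·e : x ∈ E} contains the interval {x·e : x ∈ [x₁, y_κ]}, which has length (y_κ − x₁)·e > 0. -/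

import Mathlib

open Set Matrix

noncomputable section

abbrev E2 := EuclideanSpace ℝ (Fin 2)

noncomputable def mLin (A : Matrix (Fin 2) (Fin 2) ℝ) : E2 →L[ℝ] E2 :=
  LinearMap.toContinuousLinearMap (Matrix.toEuclideanLin A)

/-- largest singular value = operator norm -/
noncomputable def a1 (A : Matrix (Fin 2) (Fin 2) ℝ) : ℝ := ‖mLin A‖

/-- `x ≺ y`: both coordinates of `y - x` are strictly positive -/
def posLt (x y : E2) : Prop := ∀ r : Fin 2, 0 < (y - x) r

lemma mLin_apply (A : Matrix (Fin 2) (Fin 2) ℝ) (v : E2) : mLin A v = Matrix.toEuclideanLin A v := rfl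

lemma mLin_apply_coord (A : Matrix (Fin 2) (Fin 2) ℝ) (v : E2) (r : Fin 2) :
    mLin A v r = ∑ s, A r s * v s := by
  simp [mLin_apply, Matrix.toEuclideanLin_apply, Matrix.mulVec, dotProduct]
  fin_cases r <;> simp

lemma mLin_mul (A B : Matrix (Fin 2) (Fin 2) ℝ) (v : E2) :
    Matrix.toEuclideanLin (A * B) v = mLin A (Matrix.toEuclideanLin B v) := by
  simp [mLin_apply, Matrix.toEuclideanLin_apply, Matrix.mulVec_mulVec]

lemma inner_eq (u v : E2) : (inner ℝ u v : ℝ) = ∑ r, u r * v r := by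
  simp [PiLp.inner_apply, RCLike.inner_apply, starRingEnd_apply]
  ring

lemma transpose_eq_conjT (M : Matrix (Fin 2) (Fin 2) ℝ) : Mᵀ = Mᴴ := by
  ext r s; simp [Matrix.conjTranspose_apply]

lemma mLin_transpose_inner (M : Matrix (Fin 2) (Fin 2) ℝ) (z e : E2) :
    (inner ℝ (mLin M z) e : ℝ) = inner ℝ z (mLin Mᵀ e) := by
  rw [mLin_apply, mLin_apply, transpose_eq_conjT, Matrix.toEuclideanLin_conjTranspose_eq_adjoint,
    LinearMap.adjoint_inner_right, real_inner_comm]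

lemma a1_transpose (M : Matrix (Fin 2) (Fin 2) ℝ) : a1 Mᵀ = a1 M := by
  unfold a1 mLin
  rw [transpose_eq_conjT, Matrix.toEuclideanLin_conjTranspose_eq_adjoint,
    LinearMap.adjoint_toContinuousLinearMap]
  exact ContinuousLinearMap.adjoint.norm_map _

lemma mLin_norm_le (M : Matrix (Fin 2) (Fin 2) ℝ) (v : E2) : ‖mLin M v‖ ≤ a1 M * ‖v‖ :=
  (mLin M).le_opNorm v

lemma toEuclideanLin_one (v : E2) : Matrix.toEuclideanLin (1 : Matrix (Fin 2) (Fin 2) ℝ) v = v := by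
  simp [Matrix.toEuclideanLin_apply]

lemma pow_norm_le (M : Matrix (Fin 2) (Fin 2) ℝ) (v : E2) (n : ℕ) :
    ‖Matrix.toEuclideanLin (M ^ n) v‖ ≤ a1 M ^ n * ‖v‖ := by
  induction n with
  | zero => simp [toEuclideanLin_one]
  | succ n ih =>
    rw [pow_succ', mLin_mul]
    calc ‖mLin M (Matrix.toEuclideanLin (M ^ n) v)‖ ≤ a1 M * ‖Matrix.toEuclideanLin (M ^ n) v‖ :=
          mLin_norm_le _ _
      _ ≤ a1 M * (a1 M ^ n * ‖v‖) := mul_le_mul_of_nonneg_left ih (norm_nonneg _)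
      _ = a1 M ^ (n + 1) * ‖v‖ := by ring


/-- Lemma 5.5: order condition on the fixed-point images `x i = π(i 1^∞)`, `y i = π(i κ^∞)`
which guarantees that every projection of the attractor in a strictly positive direction `e`
contains the interval `[x₁, y_κ]·e`, of length `(y_κ − x₁)·e > 0`. -/
theorem order_projection_condition (κ : ℕ) (hκ : 2 ≤ κ)
    (A : Fin κ → Matrix (Fin 2) (Fin 2) ℝ) (a : Fin κ → E2)
    (ᾱ : ℝ) (hᾱ : ᾱ < 1) (hinv : ∀ i, IsUnit (A i).det) (hnorm : ∀ i, a1 (A i) ≤ ᾱ)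
    (hpos : ∀ i r s, 0 < A i r s)
    (E : Set E2) (hEne : E.Nonempty) (hEc : IsCompact E)
    (hattr : E = ⋃ i, (fun v => Matrix.toEuclideanLin (A i) v + a i) '' E)
    (x y : Fin κ → E2)
    (hx : ∀ i, x i = a i + ∑' n : ℕ,
      Matrix.toEuclideanLin (A i * (A ⟨0, by omega⟩) ^ n) (a ⟨0, by omega⟩))
    (hy : ∀ i, y i = a i + ∑' n : ℕ,
      Matrix.toEuclideanLin (A i * (A ⟨κ - 1, by omega⟩) ^ n) (a ⟨κ - 1, by omega⟩))
    (hchain : ∀ k : ℕ, ∀ h : k + 1 < κ,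
      posLt (x ⟨k, by omega⟩) (x ⟨k + 1, h⟩) ∧
      posLt (x ⟨k + 1, h⟩) (y ⟨k, by omega⟩) ∧
      posLt (y ⟨k, by omega⟩) (y ⟨k + 1, h⟩)) :
    ∀ e : E2, (∀ r : Fin 2, 0 < e r) →
      ((fun v => (inner ℝ v e : ℝ)) '' segment ℝ (x ⟨0, by omega⟩) (y ⟨κ - 1, by omega⟩) ⊆
        (fun v => (inner ℝ v e : ℝ)) '' E) ∧
      0 < (inner ℝ (y ⟨κ - 1, by omega⟩ - x ⟨0, by omega⟩) e : ℝ) := by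
  classical
  have hκ0 : 0 < κ := by omega
  have hκ1 : κ - 1 < κ := by omega
  set i0 : Fin κ := ⟨0, hκ0⟩ with hi0def
  set ik : Fin κ := ⟨κ - 1, hκ1⟩ with hikdef
  have hα0 : 0 ≤ ᾱ := le_trans (norm_nonneg (mLin (A i0))) (hnorm i0)
  -- E is invariant under each map
  have hfE : ∀ i : Fin κ, ∀ v ∈ E, mLin (A i) v + a i ∈ E := by
    intro i v hv
    have : mLin (A i) v + a i ∈ ⋃ j, (fun v => Matrix.toEuclideanLin (A j) v + a j) '' E :=
      mem_iUnion.mpr ⟨i, ⟨v, hv, rfl⟩⟩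
    rwa [← hattr] at this
  -- summability
  have hsummable : ∀ j : Fin κ, Summable (fun n : ℕ => Matrix.toEuclideanLin ((A j) ^ n) (a j)) := by
    intro j
    apply Summable.of_norm_bounded
      (Summable.mul_left (‖a j‖) (summable_geometric_of_lt_one hα0 hᾱ))
    intro n
    calc ‖Matrix.toEuclideanLin ((A j) ^ n) (a j)‖ ≤ a1 (A j) ^ n * ‖a j‖ := pow_norm_le _ _ n
      _ ≤ ᾱ ^ n * ‖a j‖ :=
          mul_le_mul_of_nonneg_right (pow_le_pow_left₀ (norm_nonneg _) (hnorm j) n) (norm_nonneg _)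
      _ = ‖a j‖ * ᾱ ^ n := mul_comm _ _
  -- the fixed point structure
  have hkey : ∀ (j : Fin κ) (w : Fin κ → E2),
      (∀ i, w i = a i + ∑' n : ℕ, Matrix.toEuclideanLin (A i * (A j) ^ n) (a j)) →
      (∀ i, w i = mLin (A i) (w j) + a i) := by
    intro j w hw
    have hS := hsummable j
    have hmap : ∀ i : Fin κ, (∑' n : ℕ, Matrix.toEuclideanLin (A i * (A j) ^ n) (a j))
        = mLin (A i) (∑' n : ℕ, Matrix.toEuclideanLin ((A j) ^ n) (a j)) := by
      intro i
      rw [ContinuousLinearMap.map_tsum _ hS]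
      exact tsum_congr fun n => mLin_mul _ _ _
    have hsucc : ∀ n : ℕ, mLin (A j) (Matrix.toEuclideanLin ((A j) ^ n) (a j))
        = Matrix.toEuclideanLin ((A j) ^ (n + 1)) (a j) := by
      intro n; rw [pow_succ', mLin_mul]
    have hwj : w j = ∑' n : ℕ, Matrix.toEuclideanLin ((A j) ^ n) (a j) := by
      rw [hw j, hmap j, ContinuousLinearMap.map_tsum _ hS, tsum_congr hsucc,
        Summable.tsum_eq_zero_add hS, pow_zero, toEuclideanLin_one]
    intro i
    rw [hw i, hmap i, ← hwj, add_comm]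
  have hxf : ∀ i, x i = mLin (A i) (x i0) + a i := hkey i0 x hx
  have hyf : ∀ i, y i = mLin (A i) (y ik) + a i := hkey ik y hy
  -- contraction estimate
  have hcontr : ∀ (i : Fin κ) (v w : E2),
      dist (mLin (A i) v + a i) (mLin (A i) w + a i) ≤ ᾱ * dist v w := by
    intro i v w
    rw [dist_eq_norm, dist_eq_norm, add_sub_add_right_eq_sub, ← map_sub]
    calc ‖mLin (A i) (v - w)‖ ≤ a1 (A i) * ‖v - w‖ := mLin_norm_le _ _
      _ ≤ ᾱ * ‖v - w‖ := mul_le_mul_of_nonneg_right (hnorm i) (norm_nonneg _)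
  -- the fixed points belong to E
  have hfix : ∀ (j : Fin κ) (w : E2), w = mLin (A j) w + a j → w ∈ E := by
    intro j w hfw
    obtain ⟨z, hz⟩ := hEne
    set g : E2 → E2 := fun v => mLin (A j) v + a j with hgdef
    have hiter : ∀ n : ℕ, g^[n] z ∈ E ∧ dist (g^[n] z) w ≤ ᾱ ^ n * dist z w := by
      intro n
      induction n with
      | zero => simpa using hz
      | succ n ih =>
        rw [Function.iterate_succ_apply']
        constructor
        · exact hfE j _ ih.1
        · calc dist (g (g^[n] z)) w = dist (g (g^[n] z)) (g w) := by rw [show g w = w from hfw.symm]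
            _ ≤ ᾱ * dist (g^[n] z) w := hcontr j _ _
            _ ≤ ᾱ * (ᾱ ^ n * dist z w) := mul_le_mul_of_nonneg_left ih.2 hα0
            _ = ᾱ ^ (n + 1) * dist z w := by ring
    have htend0 : Filter.Tendsto (fun n : ℕ => dist (g^[n] z) w) Filter.atTop (nhds 0) := by
      apply squeeze_zero (fun n => dist_nonneg) (fun n => (hiter n).2)
      simpa using (tendsto_pow_atTop_nhds_zero_of_lt_one hα0 hᾱ).mul_const (dist z w)
    have htend : Filter.Tendsto (fun n : ℕ => g^[n] z) Filter.atTop (nhds w) :=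
      tendsto_iff_dist_tendsto_zero.mpr htend0
    exact hEc.isClosed.mem_of_tendsto htend (Filter.Eventually.of_forall fun n => (hiter n).1)
  have hx0E : x i0 ∈ E := hfix i0 (x i0) (hxf i0)
  -- strict monotonicity of projections
  have hlt : ∀ u v w : E2, posLt u v → (∀ r, 0 < w r) → (inner ℝ u w : ℝ) < inner ℝ v w := by
    intro u v w huv hw
    have h0 : (0 : ℝ) < inner ℝ (v - u) w := by
      rw [inner_eq]
      exact Finset.sum_pos (fun r _ => mul_pos (huv r) (hw r)) Finset.univ_nonempty
    rw [inner_sub_left] at h0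
    linarith
  have htrans : ∀ u v w : E2, posLt u v → posLt v w → posLt u w := by
    intro u v w h1 h2 r
    have a1 := h1 r
    have a2 := h2 r
    simp only [PiLp.sub_apply] at a1 a2 ⊢
    linarith
  -- x i0 ≺ y ik
  have hxy0 : posLt (x i0) (y ⟨0, hκ0⟩) :=
    htrans _ _ _ (hchain 0 (by omega)).1 (hchain 0 (by omega)).2.1
  have hind : ∀ m (h : m < κ), posLt (x i0) (y ⟨m, h⟩) := by
    intro m
    induction m with
    | zero => intro h; exact hxy0
    | succ m ih =>
      intro h
      exact htrans _ _ _ (ih (by omega)) (hchain m h).2.2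
  have hxY : posLt (x i0) (y ik) := hind (κ - 1) hκ1
  -- covering lemma
  have hcov : ∀ (e' : E2), (∀ r, 0 < e' r) → ∀ t : ℝ,
      (inner ℝ (x i0) e' : ℝ) ≤ t → t ≤ inner ℝ (y ik) e' →
      ∃ i : Fin κ, (inner ℝ (x i) e' : ℝ) ≤ t ∧ t ≤ inner ℝ (y i) e' := by
    intro e' he' t h1 h2
    set P : ℕ → Prop := fun k => ∃ h : k < κ, (inner ℝ (x ⟨k, h⟩) e' : ℝ) ≤ t with hPdef
    have hP0 : P 0 := ⟨hκ0, h1⟩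
    have hPk : P (Nat.findGreatest P (κ - 1)) :=
      Nat.findGreatest_spec (Nat.zero_le _) hP0
    set k := Nat.findGreatest P (κ - 1) with hkdef
    obtain ⟨hk, hxk⟩ := hPk
    have hkle : k ≤ κ - 1 := Nat.findGreatest_le _
    refine ⟨⟨k, hk⟩, hxk, ?_⟩
    by_cases hlast : k = κ - 1
    · have : (⟨k, hk⟩ : Fin κ) = ik := Fin.ext hlast
      rw [this]; exact h2
    · have hk1 : k + 1 < κ := by omega
      have hnP : ¬ P (k + 1) :=
        Nat.findGreatest_is_greatest (Nat.lt_succ_self k) (by omega)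
      have hx1 : t < inner ℝ (x ⟨k + 1, hk1⟩) e' := by
        by_contra hcon
        push_neg at hcon
        exact hnP ⟨hk1, hcon⟩
      have h3 := hlt _ _ e' (hchain k hk1).2.1 he'
      linarith
  -- one-step refinement
  have hstep : ∀ (e' : E2), (∀ r, 0 < e' r) → ∀ t : ℝ,
      (inner ℝ (x i0) e' : ℝ) ≤ t → t ≤ inner ℝ (y ik) e' →
      ∃ (i : Fin κ) (e'' : E2) (t' : ℝ), (∀ r, 0 < e'' r) ∧ ‖e''‖ ≤ ᾱ * ‖e'‖ ∧
        (inner ℝ (x i0) e'' : ℝ) ≤ t' ∧ t' ≤ inner ℝ (y ik) e'' ∧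
        ∀ v : E2, (inner ℝ (mLin (A i) v + a i) e' : ℝ) = inner ℝ v e'' + (t - t') := by
    intro e' he' t h1 h2
    obtain ⟨i, hxi, hyi⟩ := hcov e' he' t h1 h2
    have hid : ∀ v : E2, (inner ℝ (mLin (A i) v + a i) e' : ℝ)
        = inner ℝ v (mLin (A i)ᵀ e') + inner ℝ (a i) e' := by
      intro v
      rw [inner_add_left, mLin_transpose_inner]
    have hxi' := hid (x i0)
    rw [← hxf i] at hxi'
    have hyi' := hid (y ik)
    rw [← hyf i] at hyi'
    refine ⟨i, mLin (A i)ᵀ e', t - inner ℝ (a i) e', ?_, ?_, by linarith, by linarith, ?_⟩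
    · intro r
      rw [mLin_apply_coord]
      refine Finset.sum_pos (fun s _ => mul_pos ?_ (he' s)) Finset.univ_nonempty
      exact hpos i s r
    · calc ‖mLin (A i)ᵀ e'‖ ≤ a1 (A i)ᵀ * ‖e'‖ := mLin_norm_le _ _
        _ = a1 (A i) * ‖e'‖ := by rw [a1_transpose]
        _ ≤ ᾱ * ‖e'‖ := mul_le_mul_of_nonneg_right (hnorm i) (norm_nonneg _)
    · intro v
      rw [hid v]
      ring
  -- iterated approximation
  have hmain : ∀ n : ℕ, ∀ (e' : E2), (∀ r, 0 < e' r) → ∀ t : ℝ,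
      (inner ℝ (x i0) e' : ℝ) ≤ t → t ≤ inner ℝ (y ik) e' →
      ∃ p ∈ E, |(inner ℝ p e' : ℝ) - t| ≤ ‖y ik - x i0‖ * ᾱ ^ n * ‖e'‖ := by
    intro n
    induction n with
    | zero =>
      intro e' he' t h1 h2
      refine ⟨x i0, hx0E, ?_⟩
      rw [abs_sub_comm, abs_of_nonneg (by linarith)]
      have h4 : (inner ℝ (y ik - x i0) e' : ℝ) = inner ℝ (y ik) e' - inner ℝ (x i0) e' :=
        inner_sub_left _ _ _
      have h5 : (inner ℝ (y ik - x i0) e' : ℝ) ≤ ‖y ik - x i0‖ * ‖e'‖ := real_inner_le_norm _ _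
      rw [pow_zero, mul_one]
      linarith
    | succ n ih =>
      intro e' he' t h1 h2
      obtain ⟨i, e'', t', he'', hn'', hb1, hb2, hid⟩ := hstep e' he' t h1 h2
      obtain ⟨p', hp'E, hp'⟩ := ih e'' he'' t' hb1 hb2
      refine ⟨mLin (A i) p' + a i, hfE i p' hp'E, ?_⟩
      rw [hid p']
      have heq : (inner ℝ p' e'' : ℝ) + (t - t') - t = inner ℝ p' e'' - t' := by ring
      rw [heq]
      calc |(inner ℝ p' e'' : ℝ) - t'| ≤ ‖y ik - x i0‖ * ᾱ ^ n * ‖e''‖ := hp'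
        _ ≤ ‖y ik - x i0‖ * ᾱ ^ n * (ᾱ * ‖e'‖) :=
            mul_le_mul_of_nonneg_left hn''
              (mul_nonneg (norm_nonneg _) (pow_nonneg hα0 n))
        _ = ‖y ik - x i0‖ * ᾱ ^ (n + 1) * ‖e'‖ := by ring
  -- conclusion
  intro e he
  have hAB : (inner ℝ (x i0) e : ℝ) < inner ℝ (y ik) e := hlt _ _ e hxY he
  have hlen : (0 : ℝ) < inner ℝ (y ik - x i0) e := by
    rw [inner_sub_left]; linarith
  refine ⟨?_, hlen⟩
  rintro τ ⟨z, hz, rfl⟩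
  obtain ⟨α, β, hα, hβ, hαβ, rfl⟩ := hz
  have hzval : (inner ℝ (α • x i0 + β • y ik) e : ℝ) = α * inner ℝ (x i0) e + β * inner ℝ (y ik) e := by
    rw [inner_add_left, real_inner_smul_left, real_inner_smul_left]
  have hb : (0:ℝ) ≤ β * ((inner ℝ (y ik) e : ℝ) - inner ℝ (x i0) e) :=
    mul_nonneg hβ (by linarith)
  have ha : (0:ℝ) ≤ α * ((inner ℝ (y ik) e : ℝ) - inner ℝ (x i0) e) :=
    mul_nonneg hα (by linarith)
  have hα1 : α = 1 - β := by linarith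
  have ha' : (0:ℝ) ≤ (1 - β) * ((inner ℝ (y ik) e : ℝ) - inner ℝ (x i0) e) := by
    rw [← hα1]; exact ha
  have h1 : (inner ℝ (x i0) e : ℝ) ≤ inner ℝ (α • x i0 + β • y ik) e := by
    rw [hzval, hα1]; linarith [hb]
  have h2 : (inner ℝ (α • x i0 + β • y ik) e : ℝ) ≤ inner ℝ (y ik) e := by
    rw [hzval, hα1]; linarith [ha']
  have hcs : IsCompact ((fun v => (inner ℝ v e : ℝ)) '' E) :=
    hEc.image (Continuous.inner continuous_id continuous_const)
  have hmem : (inner ℝ (α • x i0 + β • y ik) e : ℝ) ∈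
      closure ((fun v => (inner ℝ v e : ℝ)) '' E) := by
    rw [Metric.mem_closure_iff]
    intro ε hε
    have htend : Filter.Tendsto (fun n : ℕ => ‖y ik - x i0‖ * ᾱ ^ n * ‖e‖)
        Filter.atTop (nhds 0) := by
      have h0 := (tendsto_pow_atTop_nhds_zero_of_lt_one hα0 hᾱ).const_mul ‖y ik - x i0‖
      simpa using h0.mul_const ‖e‖
    obtain ⟨n, hn⟩ := (htend.eventually (gt_mem_nhds hε)).exists
    obtain ⟨p, hpE, hp⟩ := hmain n e he _ h1 h2
    refine ⟨inner ℝ p e, ⟨p, hpE, rfl⟩, ?_⟩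
    rw [Real.dist_eq, abs_sub_comm]
    exact lt_of_le_of_lt hp hn
  rwa [hcs.isClosed.closure_eq] at hmem

end
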